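/- Let V and W be n×ℓ (0,1)-matrices and let V⁺ denote V with its rows cyclically shifted up by one (row i of V⁺ equals row i+1 of V for 1 ≤ i ≤ n−1, and row n of V⁺ equals row 1 of V). Suppose every entry of the matrix T(W−V) − V⁺ is ≥ −1, where T is the n×n lower-triangular matrix with all entries on and below the diagonal equal to 1. For 1 ≤ i ≤ n put A_i = {s ∈ {1,…,ℓ} : V_{i,s} = 1} and B_i = {s ∈ {1,…,ℓ} : W_{i,s} = 1}. Then for every m with 1 ≤ m ≤ n one has ⋃_{k=1}^{m−1} (A_k ∩ A_m) ⊆ ⋃_{i=1}^{m−1} B_i. -/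

import Mathlib

namespace PaperStmt

/-- A (0,1)-matrix: every entry is 0 or 1. -/
def ZeroOneMat {α β : Type*} (M : Matrix α β ℝ) : Prop := ∀ i j, M i j = 0 ∨ M i j = 1

/-- The lower-triangular matrix `T` with all entries on and below the diagonal equal to 1. -/
def Tmat (n : ℕ) : Matrix (Fin n) (Fin n) ℝ := fun i j => if j ≤ i then 1 else 0

/-- The permutation matrix associated to a permutation `σ` (row `i` is `e_{σ i}`). -/
def permMat {n : ℕ} (σ : Equiv.Perm (Fin n)) : Matrix (Fin n) (Fin n) ℝ :=
  fun i j => if σ i = j then 1 else 0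

/-- Cyclic successor on `Fin n`. -/
def cycSucc {n : ℕ} (i : Fin n) : Fin n := ⟨(i.val + 1) % n, Nat.mod_lt _ i.pos⟩

/-- `M⁺`: the matrix `M` with its rows cyclically shifted up by one. -/
def shiftRows {n : ℕ} {ι : Type*} (M : Matrix (Fin n) ι ℝ) : Matrix (Fin n) ι ℝ :=
  fun i j => M (cycSucc i) j

/-- The system `(B - A) X = 0` is *normal* if there is a permutation matrix `P` such that
every entry of `T P (B - A) - P⁺ A` is an integer `≥ -1`. -/
def IsNormal {n : ℕ} {ι : Type*} (A B : Matrix (Fin n) ι ℝ) : Prop :=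
  ∃ σ : Equiv.Perm (Fin n), ∀ (i : Fin n) (j : ι),
    ∃ z : ℤ,
      (Tmat n * (permMat σ * (B - A)) - shiftRows (permMat σ) * A) i j = (z : ℝ) ∧ -1 ≤ z

end PaperStmt

namespace PaperStmt

/-- Let `V`, `W` be `n × ℓ` (0,1)-matrices with every entry of `T (W - V) - V⁺` at least `-1`.
Setting `A_i = {s | V i s = 1}` and `B_i = {s | W i s = 1}`, for every `m` one has
`⋃_{k < m} (A_k ∩ A_m) ⊆ ⋃_{i < m} B_i`. -/
theorem normality_inclusion {n ℓ : ℕ} (V W : Matrix (Fin n) (Fin ℓ) ℝ)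
    (hV : ZeroOneMat V) (hW : ZeroOneMat W)
    (h : ∀ i j, (-1 : ℝ) ≤ (Tmat n * (W - V) - shiftRows V) i j)
    (m : Fin n) :
    (⋃ k ∈ {k : Fin n | k < m}, ({s : Fin ℓ | V k s = 1} ∩ {s : Fin ℓ | V m s = 1})) ⊆
      ⋃ i ∈ {i : Fin n | i < m}, {s : Fin ℓ | W i s = 1} := by
  intro s hs
  simp only [Set.mem_iUnion, Set.mem_inter_iff, Set.mem_setOf_eq] at hs ⊢
  obtain ⟨k, hkm, hVk, hVm⟩ := hs
  by_contra hc
  push_neg at hc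
  have hW0 : ∀ i : Fin n, i < m → W i s = 0 := by
    intro i him
    rcases hW i s with h0 | h1
    · exact h0
    · exact absurd h1 (hc i him)
  have hm1 : m.val - 1 < n := lt_of_le_of_lt (Nat.sub_le _ _) m.isLt
  set i : Fin n := ⟨m.val - 1, hm1⟩ with hi
  have hmpos : 0 < m.val := lt_of_le_of_lt (Nat.zero_le _) hkm
  have hcyc : cycSucc i = m := by
    simp only [cycSucc, hi]
    ext
    simp [Nat.sub_add_cancel hmpos, Nat.mod_eq_of_lt m.isLt]
  have hle : ∀ j : Fin n, j ≤ i ↔ j < m := by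
    intro j
    constructor
    · intro hj
      exact lt_of_le_of_lt hj (Fin.lt_def.mpr (Nat.sub_lt hmpos one_pos))
    · intro hj
      exact Fin.mk_le_of_le_val (Nat.le_sub_one_of_lt hj)
  have key := h i s
  rw [Matrix.sub_apply, Matrix.mul_apply] at key
  have hshift : shiftRows V i s = 1 := by
    simp [shiftRows, hcyc, hVm]
  rw [hshift] at key
  have hsum : (∑ j : Fin n, Tmat n i j * (W - V) j s) ≤ -1 := by
    have hterm : ∀ j : Fin n, Tmat n i j * (W - V) j s ≤ if j = k then -1 else 0 := by
      intro j
      by_cases hjk : j = k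
      · subst hjk
        have : j ≤ i := (hle j).2 hkm
        simp [Tmat, this, hW0 j hkm, hVk]
      · simp only [hjk, if_neg, Tmat]
        by_cases hji : j ≤ i
        · have hjm : j < m := (hle j).1 hji
          rcases hV j s with h0 | h1
          · simp [hji, Matrix.sub_apply, hW0 j hjm, h0]
          · simp [hji, Matrix.sub_apply, hW0 j hjm, h1]
        · simp [hji]
    calc (∑ j : Fin n, Tmat n i j * (W - V) j s)
        ≤ ∑ j : Fin n, if j = k then (-1 : ℝ) else 0 := Finset.sum_le_sum fun j _ => hterm j
      _ = -1 := by simp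
  linarith

end PaperStmt
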